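/- Let $T,T_\mu:\mathbb{R}^n\to\mathbb{R}^n$ both be monotone maps satisfying $T(J+ce)=TJ+\alpha c e$ and $T_\mu(J+ce)=T_\mu J+\alpha ce$ for all $J\in\mathbb{R}^n,c\in\mathbb{R}$, with $0<\alpha<1$, $T_\mu J\leq TJ$ for all $J$, fixed points $J^\mu$ of $T_\mu$ and $J^*$ of $T$. Suppose $TJ^\mu\geq J^\mu$ and $\|TJ_k - T_\mu J_k\|_\infty \leq \varepsilon$ where $J_k$ satisfies $\|J_k - J^\mu\|_\infty\leq\delta$. Then $J^{\mu'} \geq T J^\mu - \frac{2\alpha\delta+\varepsilon}{1-\alpha}e$, where $\mu'$ is the policy with $T_{\mu'}J_k = T J_k$ (greedy w.r.t. $J_k$ up to $\varepsilon$) and $J^{\mu'}$ is the fixed point of $T_{\mu'}$, assuming $T_{\mu'}$ is also monotone with the shift property and $\|T_{\mu'}J_k - TJ_k\|_\infty\le\varepsilon$. -/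

import Mathlib

theorem stmt_18 (n : ℕ) (α δ ε : ℝ) (hα0 : 0 < α) (hα1 : α < 1)
    (T Tμ Tμ' : (Fin n → ℝ) → (Fin n → ℝ))
    (hTshift : ∀ (J : Fin n → ℝ) (c : ℝ),
      T (J + c • (1 : Fin n → ℝ)) = T J + (α * c) • (1 : Fin n → ℝ))
    (hTμshift : ∀ (J : Fin n → ℝ) (c : ℝ),
      Tμ (J + c • (1 : Fin n → ℝ)) = Tμ J + (α * c) • (1 : Fin n → ℝ))
    (hTμ'shift : ∀ (J : Fin n → ℝ) (c : ℝ),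
      Tμ' (J + c • (1 : Fin n → ℝ)) = Tμ' J + (α * c) • (1 : Fin n → ℝ))
    (hTmono : ∀ J J' : Fin n → ℝ, J ≤ J' → T J ≤ T J')
    (hTμmono : ∀ J J' : Fin n → ℝ, J ≤ J' → Tμ J ≤ Tμ J')
    (hTμ'mono : ∀ J J' : Fin n → ℝ, J ≤ J' → Tμ' J ≤ Tμ' J')
    (hμleT : ∀ J : Fin n → ℝ, Tμ J ≤ T J)
    (Jμ Jstar Jμ' : Fin n → ℝ)
    (hfixμ : Tμ Jμ = Jμ) (hfixT : T Jstar = Jstar) (hfixμ' : Tμ' Jμ' = Jμ')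
    (himp : Jμ ≤ T Jμ)
    (Jk : Fin n → ℝ) (hJk : ‖Jk - Jμ‖ ≤ δ)
    (hgreedy1 : ‖T Jk - Tμ Jk‖ ≤ ε)
    (hgreedy2 : ‖Tμ' Jk - T Jk‖ ≤ ε) :
    T Jμ - ((2 * α * δ + ε) / (1 - α)) • (1 : Fin n → ℝ) ≤ Jμ' := by
  have h1α : (0:ℝ) < 1 - α := by linarith
  set d : ℝ := (2 * α * δ + ε) / (1 - α) with hd
  have hdval : d * (1 - α) = 2 * α * δ + ε := by
    rw [hd, div_mul_cancel₀ _ h1α.ne']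
  -- componentwise shift lemma
  have key : ∀ (S : (Fin n → ℝ) → (Fin n → ℝ)),
      (∀ J c, S (J + c • (1 : Fin n → ℝ)) = S J + (α * c) • (1 : Fin n → ℝ)) →
      ∀ (J : Fin n → ℝ) (c : ℝ) (i : Fin n), S (fun j => J j + c) i = S J i + α * c := by
    intro S hS J c i
    have hfun : (J + c • (1 : Fin n → ℝ)) = fun j => J j + c := by
      funext j; simp
    have := congrFun (hS J c) i
    rw [hfun] at this
    simpa using this
  -- componentwise abs bounds
  have hJkb : ∀ i, |Jk i - Jμ i| ≤ δ := by
    intro i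
    have h := le_trans (norm_le_pi_norm (Jk - Jμ) i) hJk
    simpa [Real.norm_eq_abs] using h
  have hg2 : ∀ i, |Tμ' Jk i - T Jk i| ≤ ε := by
    intro i
    have h := le_trans (norm_le_pi_norm (Tμ' Jk - T Jk) i) hgreedy2
    simpa [Real.norm_eq_abs] using h
  -- Step A: T Jμ i - (2αδ+ε) ≤ Tμ' Jμ i
  have stepA : ∀ i, T Jμ i - (2 * α * δ + ε) ≤ Tμ' Jμ i := by
    intro i
    have a1 : Tμ' (fun j => Jk j + (-δ)) i ≤ Tμ' Jμ i := by
      have hle : (fun j => Jk j + (-δ)) ≤ Jμ := by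
        intro j
        have := (abs_le.mp (hJkb j)).2
        simp only []
        linarith
      exact hTμ'mono _ _ hle i
    have a2 : Tμ' (fun j => Jk j + (-δ)) i = Tμ' Jk i + α * (-δ) :=
      key Tμ' hTμ'shift Jk (-δ) i
    have a3 : T Jk i - ε ≤ Tμ' Jk i := by
      have := (abs_le.mp (hg2 i)).1
      linarith
    have a4 : T (fun j => Jμ j + (-δ)) i ≤ T Jk i := by
      have hle : (fun j => Jμ j + (-δ)) ≤ Jk := by
        intro j
        have := (abs_le.mp (hJkb j)).1
        simp only []
        linarith
      exact hTmono _ _ hle i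
    have a5 : T (fun j => Jμ j + (-δ)) i = T Jμ i + α * (-δ) :=
      key T hTshift Jμ (-δ) i
    linarith
  rw [Pi.le_def]
  intro i
  -- minimizer of g
  obtain ⟨i0, -, hmin⟩ := Finset.exists_min_image Finset.univ
    (fun j => Jμ' j - (T Jμ j - d)) ⟨i, Finset.mem_univ i⟩
  set β : ℝ := Jμ' i0 - (T Jμ i0 - d) with hβ
  have hmin' : ∀ j, β ≤ Jμ' j - (T Jμ j - d) := fun j => hmin j (Finset.mem_univ j)
  have b1 : Tμ' (fun k => T Jμ k + (β - d)) i0 ≤ Tμ' Jμ' i0 := by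
    have hle : (fun k => T Jμ k + (β - d)) ≤ Jμ' := by
      intro k
      have := hmin' k
      simp only []
      linarith
    exact hTμ'mono _ _ hle i0
  have b2 : Tμ' (fun k => T Jμ k + (β - d)) i0 = Tμ' (T Jμ) i0 + α * (β - d) :=
    key Tμ' hTμ'shift (T Jμ) (β - d) i0
  have b3 : Tμ' Jμ i0 ≤ Tμ' (T Jμ) i0 := hTμ'mono _ _ himp i0
  have b4 : Tμ' Jμ' i0 = Jμ' i0 := congrFun hfixμ' i0
  have b5 := stepA i0
  -- β ≥ α β + (d - α d - (2αδ+ε)) = α β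
  have hβ0 : 0 ≤ β := by nlinarith
  have := hmin' i
  have : T Jμ i - d ≤ Jμ' i := by linarith
  simpa using this
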